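/- Let f : Ordinal → Cardinal be a function satisfying: (i) f(β) ≤ ℵ₀ for all β < ω₁; (ii) f(β+1) ≤ f(β) · ℵ₀ for all β; (iii) for every limit ordinal α, f(α) ≤ (⨆_{β<α} f(β)) · |α|, where |α| is the cardinality of α. Then for every ordinal τ and every α < ω_{τ+1}, one has f(α) ≤ ℵ_τ. -/

import Mathlib

open Cardinal

theorem card_bound_transfinite_induction (f : Ordinal → Cardinal)
    (h1 : ∀ β < (aleph 1).ord, f β ≤ aleph0)
    (h2 : ∀ β, f (β + 1) ≤ f β * aleph0)
    (h3 : ∀ α : Ordinal, Order.IsSuccLimit α → f α ≤ (⨆ β : Set.Iio α, f β.1) * α.card) :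
    ∀ τ : Ordinal, ∀ α < (aleph (τ + 1)).ord, f α ≤ aleph τ := by
  intro τ α
  induction α using Ordinal.induction with
  | h α IH =>
    intro hα
    have haleph : aleph0 ≤ aleph τ := aleph0_le_aleph τ
    rcases Ordinal.zero_or_succ_or_isSuccLimit α with h0 | ⟨β, rfl⟩ | hlim
    · subst h0
      refine (h1 0 ?_).trans haleph
      simp [Cardinal.lt_ord, aleph_pos]
      exact Ordinal.omega_pos 1
    · have hβ : β < β + 1 := Order.lt_succ β
      have : f β ≤ aleph τ := IH β hβ (hβ.trans hα)
      calc f (β + 1) ≤ f β * aleph0 := h2 β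
        _ ≤ aleph τ * aleph τ := mul_le_mul' this haleph
        _ = aleph τ := Cardinal.mul_eq_self haleph
    · have hcard : α.card ≤ aleph τ := by
        have := (Cardinal.lt_ord.1 hα)
        rwa [Ordinal.add_one_eq_succ, aleph_succ, Order.lt_succ_iff] at this
      have hsup : (⨆ β : Set.Iio α, f β.1) ≤ aleph τ := by
        have : Nonempty (Set.Iio α) := ⟨⟨0, hlim.pos⟩⟩
        exact ciSup_le fun β => IH β.1 β.2 (β.2.trans hα)
      calc f α ≤ (⨆ β : Set.Iio α, f β.1) * α.card := h3 α hlim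
        _ ≤ aleph τ * aleph τ := mul_le_mul' hsup hcard
        _ = aleph τ := Cardinal.mul_eq_self haleph
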